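/- Let A₁ = diag(σ, σ^{-1}) with σ > 1 and A₂ the rotation by π/2 (matrix [[0,−1],[1,0]]) in SL(2,ℝ), and consider the i.i.d. random matrix product with probabilities (p₁, p₂), p₂ > 0. Then both Lyapunov exponents vanish: λ₊ = λ₋ = 0. In particular, since λ₊(A,(1,0)) = log σ > 0, the Lyapunov exponents are discontinuous at the degenerate probability vector (1,0). -/

import Mathlib

open MeasureTheory Filter

noncomputable section

namespace KiferAux
open Matrix

abbrev Mat2 := Matrix (Fin 2) (Fin 2) ℝ
abbrev E2 := EuclideanSpace ℝ (Fin 2)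

def kDm (σ : ℝ) (e : ℤ) : Mat2 := !![σ^e, 0; 0, σ^(-e)]
def kRm : Mat2 := !![0,-1;1,0]
def kRot (s : ℤ) : Mat2 := if s = 1 then 1 else kRm
def kg : Fin 2 → ℤ := ![1, 0]
def kh : Fin 2 → ℤ := ![1, -1]

def ke : (n : ℕ) → (Fin n → Fin 2) → ℤ
  | 0, _ => 0
  | n+1, w => kg (w 0) + kh (w 0) * ke n (Fin.tail w)

def ks : (n : ℕ) → (Fin n → Fin 2) → ℤ
  | 0, _ => 1
  | n+1, w => kh (w 0) * ks n (Fin.tail w)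

lemma ks_cases (n : ℕ) (w : Fin n → Fin 2) : ks n w = 1 ∨ ks n w = -1 := by
  induction n with
  | zero => left; rfl
  | succ n ih =>
    have h := ih (Fin.tail w)
    have h2 : kh (w 0) = 1 ∨ kh (w 0) = -1 := by
      have hx : w 0 = 0 ∨ w 0 = 1 := by omega
      rcases hx with hx | hx <;> simp [kh, hx]
    rcases h with h | h <;> rcases h2 with h2 | h2 <;> simp [ks, h, h2]

lemma Dm_zero (σ : ℝ) : kDm σ 0 = 1 := by
  simp [kDm]; exact (Matrix.one_fin_two (α := ℝ)).symm

lemma Dm_mul_Dm {σ : ℝ} (hσ : σ ≠ 0) (a b : ℤ) : kDm σ a * kDm σ b = kDm σ (a + b) := by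
  simp only [kDm]
  ext i j
  fin_cases i <;> fin_cases j <;>
    simp [Matrix.mul_apply, Fin.sum_univ_two, ← _root_.zpow_neg, ← zpow_add₀ hσ] <;> ring_nf

lemma Dm_mul_Rm {σ : ℝ} (a : ℤ) : kDm σ a * kRm = kRm * kDm σ (-a) := by
  simp only [kDm, kRm]
  ext i j
  fin_cases i <;> fin_cases j <;> simp [Matrix.mul_apply, Fin.sum_univ_two]

lemma Rm_mul_Rm : kRm * kRm = (-1 : Mat2) := by
  simp only [kRm]
  ext i j
  fin_cases i <;> fin_cases j <;> simp [Matrix.mul_apply, Fin.sum_univ_two, Matrix.one_fin_two]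

def kM (σ : ℝ) : Fin 2 → Mat2 := ![!![σ, 0; 0, σ⁻¹], kRm]
def kMinv (σ : ℝ) : Fin 2 → Mat2 := ![!![σ⁻¹, 0; 0, σ], !![0, 1; -1, 0]]

lemma kM_zero (σ : ℝ) : kM σ 0 = kDm σ 1 := by
  simp [kM, kDm]
lemma kM_one (σ : ℝ) : kM σ 1 = kRm := rfl
lemma kMinv_zero (σ : ℝ) : kMinv σ 0 = kDm σ (-1) := by
  simp [kMinv, kDm]
lemma kMinv_one (σ : ℝ) : kMinv σ 1 = -kRm := by
  simp only [kMinv, kRm]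
  norm_num [← Matrix.ext_iff, Fin.forall_fin_two]

/-- Normal form for the reversed product of `kM`'s. -/
lemma P_form {σ : ℝ} (hσ : σ ≠ 0) (n : ℕ) (w : Fin n → Fin 2) :
    (List.ofFn fun i => kM σ (w i)).reverse.prod = kRot (ks n w) * kDm σ (ke n w) ∨
    (List.ofFn fun i => kM σ (w i)).reverse.prod = -(kRot (ks n w) * kDm σ (ke n w)) := by
  induction n with
  | zero => left; simp [ks, ke, kRot, Dm_zero]
  | succ n ih =>
    have hx : w 0 = 0 ∨ w 0 = 1 := by omega
    have hlist : (List.ofFn fun i : Fin (n+1) => kM σ (w i)).reverse.prod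
        = (List.ofFn fun i : Fin n => kM σ (Fin.tail w i)).reverse.prod * kM σ (w 0) := by
      rw [List.ofFn_succ, List.reverse_cons, List.prod_append, List.prod_singleton]
      rfl
    rcases hx with hx | hx
    · have h1 : ks (n+1) w = ks n (Fin.tail w) := by simp [ks, kh, hx]
      have h2 : ke (n+1) w = ke n (Fin.tail w) + 1 := by simp [ke, kg, kh, hx]; ring
      rcases ih (Fin.tail w) with h | h
      · left
        rw [hlist, h, hx, kM_zero, mul_assoc, Dm_mul_Dm hσ, h1, h2]
      · right
        rw [hlist, h, hx, kM_zero, neg_mul, mul_assoc, Dm_mul_Dm hσ, h1, h2]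
    · have h1 : ks (n+1) w = -(ks n (Fin.tail w)) := by simp [ks, kh, hx]
      have h2 : ke (n+1) w = -(ke n (Fin.tail w)) := by simp [ke, kg, kh, hx]
      rcases ks_cases n (Fin.tail w) with hs | hs <;> rcases ih (Fin.tail w) with h | h
      · left
        rw [hlist, h, hx, kM_one, hs, h1, h2, hs]
        simp only [kRot]
        norm_num
        rw [Dm_mul_Rm]
      · right
        rw [hlist, h, hx, kM_one, hs, h1, h2, hs]
        simp only [kRot]
        norm_num
        rw [Dm_mul_Rm]
      · right
        rw [hlist, h, hx, kM_one, hs, h1, h2, hs]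
        simp only [kRot]
        norm_num
        rw [mul_assoc, Dm_mul_Rm, ← mul_assoc, Rm_mul_Rm, neg_one_mul]
      · left
        rw [hlist, h, hx, kM_one, hs, h1, h2, hs]
        simp only [kRot]
        norm_num
        rw [mul_assoc, Dm_mul_Rm, ← mul_assoc, Rm_mul_Rm, neg_one_mul, neg_neg]

/-- Normal form for the forward product of `kMinv`'s. -/
lemma N_form {σ : ℝ} (hσ : σ ≠ 0) (n : ℕ) (w : Fin n → Fin 2) :
    (List.ofFn fun i => kMinv σ (w i)).prod = kDm σ (-(ke n w)) * kRot (ks n w) ∨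
    (List.ofFn fun i => kMinv σ (w i)).prod = -(kDm σ (-(ke n w)) * kRot (ks n w)) := by
  induction n with
  | zero => left; simp [ks, ke, kRot, Dm_zero]
  | succ n ih =>
    have hx : w 0 = 0 ∨ w 0 = 1 := by omega
    have hlist : (List.ofFn fun i : Fin (n+1) => kMinv σ (w i)).prod
        = kMinv σ (w 0) * (List.ofFn fun i : Fin n => kMinv σ (Fin.tail w i)).prod := by
      rw [List.ofFn_succ, List.prod_cons]
      rfl
    rcases hx with hx | hx
    · have h1 : ks (n+1) w = ks n (Fin.tail w) := by simp [ks, kh, hx]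
      have h2 : -(ke (n+1) w) = -1 + -(ke n (Fin.tail w)) := by simp [ke, kg, kh, hx]; ring
      rcases ih (Fin.tail w) with h | h
      · left
        rw [hlist, h, hx, kMinv_zero, ← mul_assoc, Dm_mul_Dm hσ, h1, h2]
      · right
        rw [hlist, h, hx, kMinv_zero, mul_neg, ← mul_assoc, Dm_mul_Dm hσ, h1, h2]
    · have h1 : ks (n+1) w = -(ks n (Fin.tail w)) := by simp [ks, kh, hx]
      have h2 : -(ke (n+1) w) = ke n (Fin.tail w) := by simp [ke, kg, kh, hx]
      rcases ks_cases n (Fin.tail w) with hs | hs <;> rcases ih (Fin.tail w) with h | h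
      · right
        rw [hlist, h, hx, kMinv_one, hs, h1, h2, hs]
        simp only [kRot]
        norm_num
        rw [Dm_mul_Rm]
      · left
        rw [hlist, h, hx, kMinv_one, hs, h1, h2, hs]
        simp only [kRot]
        norm_num
        rw [Dm_mul_Rm]
      · left
        rw [hlist, h, hx, kMinv_one, hs, h1, h2, hs]
        simp only [kRot]
        norm_num
        rw [show kDm σ (-ke n (Fin.tail w)) * kRm = kRm * kDm σ (ke n (Fin.tail w)) from by rw [Dm_mul_Rm, neg_neg], ← mul_assoc, Rm_mul_Rm]
        rw [neg_one_mul]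
        try rw [neg_neg]
      · right
        rw [hlist, h, hx, kMinv_one, hs, h1, h2, hs]
        simp only [kRot]
        norm_num
        rw [show kDm σ (-ke n (Fin.tail w)) * kRm = kRm * kDm σ (ke n (Fin.tail w)) from by rw [Dm_mul_Rm, neg_neg], ← mul_assoc, Rm_mul_Rm]
        rw [neg_one_mul]
        try rw [neg_neg]

section Norms

lemma norm_E2 (x : E2) : ‖x‖ = Real.sqrt (x 0 ^ 2 + x 1 ^ 2) := by
  rw [EuclideanSpace.norm_eq]
  simp [Fin.sum_univ_two, sq_abs]

lemma apply_coord (M : Mat2) (x : E2) (j : Fin 2) :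
    (toEuclideanCLM (𝕜 := ℝ) M) x j = M.mulVec (fun k => x k) j := rfl

lemma norm_clm_eq_max (M : Mat2) (c d : ℝ)
    (h1 : ∀ x : E2, ((toEuclideanCLM (𝕜 := ℝ) M) x 0)^2 + ((toEuclideanCLM (𝕜 := ℝ) M) x 1)^2
        = c^2 * (x 0)^2 + d^2 * (x 1)^2)
    (h2 : ∃ x : E2, ‖x‖ = 1 ∧ ‖(toEuclideanCLM (𝕜 := ℝ) M) x‖ = max |c| |d|) :
    ‖(toEuclideanCLM (𝕜 := ℝ) M : E2 →L[ℝ] E2)‖ = max |c| |d| := by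
  apply le_antisymm
  · apply ContinuousLinearMap.opNorm_le_bound _ (le_max_iff.mpr (Or.inl (abs_nonneg c)))
    intro x
    rw [norm_E2, norm_E2, h1, ← Real.sqrt_sq (le_max_iff.mpr (Or.inl (abs_nonneg c))),
      ← Real.sqrt_mul (sq_nonneg _)]
    apply Real.sqrt_le_sqrt
    have hc : c^2 ≤ (max |c| |d|)^2 := by
      have : |c| ≤ max |c| |d| := le_max_left _ _
      nlinarith [abs_nonneg c, sq_abs c]
    have hd : d^2 ≤ (max |c| |d|)^2 := by
      have : |d| ≤ max |c| |d| := le_max_right _ _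
      nlinarith [abs_nonneg d, sq_abs d]
    nlinarith [sq_nonneg (x 0), sq_nonneg (x 1)]
  · obtain ⟨x, hx1, hx2⟩ := h2
    calc max |c| |d| = ‖(toEuclideanCLM (𝕜 := ℝ) M) x‖ := hx2.symm
    _ ≤ ‖(toEuclideanCLM (𝕜 := ℝ) M : E2 →L[ℝ] E2)‖ * ‖x‖ := ContinuousLinearMap.le_opNorm _ _
    _ = _ := by rw [hx1, mul_one]

lemma norm_diag (c d : ℝ) :
    ‖(toEuclideanCLM (𝕜 := ℝ) !![c,0;0,d] : E2 →L[ℝ] E2)‖ = max |c| |d| := by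
  apply norm_clm_eq_max
  · intro x
    simp [apply_coord, Matrix.mulVec, dotProduct, Fin.sum_univ_two]
    ring
  · rcases le_total |c| |d| with h | h
    · refine ⟨EuclideanSpace.single 1 1, by simp, ?_⟩
      rw [norm_E2]
      simp [apply_coord, Matrix.mulVec, dotProduct, Fin.sum_univ_two,
        EuclideanSpace.single_apply, max_eq_right h, Real.sqrt_sq_eq_abs]
    · refine ⟨EuclideanSpace.single 0 1, by simp, ?_⟩
      rw [norm_E2]
      simp [apply_coord, Matrix.mulVec, dotProduct, Fin.sum_univ_two,
        EuclideanSpace.single_apply, max_eq_left h, Real.sqrt_sq_eq_abs]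

lemma norm_anti (c d : ℝ) :
    ‖(toEuclideanCLM (𝕜 := ℝ) !![0,c;d,0] : E2 →L[ℝ] E2)‖ = max |c| |d| := by
  rw [max_comm]
  apply norm_clm_eq_max
  · intro x
    simp [apply_coord, Matrix.mulVec, dotProduct, Fin.sum_univ_two]
    ring
  · rcases le_total |d| |c| with h | h
    · refine ⟨EuclideanSpace.single 1 1, by simp, ?_⟩
      rw [norm_E2]
      simp [apply_coord, Matrix.mulVec, dotProduct, Fin.sum_univ_two,
        EuclideanSpace.single_apply, max_eq_right h, Real.sqrt_sq_eq_abs]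
    · refine ⟨EuclideanSpace.single 0 1, by simp, ?_⟩
      rw [norm_E2]
      simp [apply_coord, Matrix.mulVec, dotProduct, Fin.sum_univ_two,
        EuclideanSpace.single_apply, max_eq_left h, Real.sqrt_sq_eq_abs]

lemma max_zpow {σ : ℝ} (hσ : 1 < σ) (e : ℤ) : max |σ^e| |σ^(-e)| = σ^|e| := by
  have h0 : (0:ℝ) < σ := lt_trans one_pos hσ
  rw [abs_of_pos (zpow_pos h0 _), abs_of_pos (zpow_pos h0 _)]
  rcases le_total 0 e with he | he
  · rw [max_eq_left (zpow_le_zpow_right₀ hσ.le (by omega)), abs_of_nonneg he]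
  · rw [max_eq_right (zpow_le_zpow_right₀ hσ.le (by omega)), abs_of_nonpos he]

lemma Rm_mul_Dm_eq {σ : ℝ} (e : ℤ) : kRm * kDm σ e = !![0, -(σ^(-e)); σ^e, 0] := by
  simp only [kRm, kDm]
  ext i j
  fin_cases i <;> fin_cases j <;> simp [Matrix.mul_apply, Fin.sum_univ_two]

lemma Dm_mul_Rm_eq {σ : ℝ} (e : ℤ) : kDm σ e * kRm = !![0, -(σ^e); σ^(-e), 0] := by
  simp only [kRm, kDm]
  ext i j
  fin_cases i <;> fin_cases j <;> simp [Matrix.mul_apply, Fin.sum_univ_two]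

lemma norm_Rot_Dm {σ : ℝ} (hσ : 1 < σ) (s e : ℤ) :
    ‖(toEuclideanCLM (𝕜 := ℝ) (kRot s * kDm σ e) : E2 →L[ℝ] E2)‖ = σ^|e| := by
  by_cases hs : s = 1
  · rw [hs]
    simp only [kRot, if_pos rfl, if_true, one_mul, kDm]
    rw [norm_diag, max_zpow hσ]
  · simp only [kRot, if_neg hs]
    rw [Rm_mul_Dm_eq, norm_anti, abs_neg, max_comm (|σ^(-e)|) (|σ^e|), max_zpow hσ]

lemma norm_Dm_Rot {σ : ℝ} (hσ : 1 < σ) (s e : ℤ) :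
    ‖(toEuclideanCLM (𝕜 := ℝ) (kDm σ (-e) * kRot s) : E2 →L[ℝ] E2)‖ = σ^|e| := by
  by_cases hs : s = 1
  · rw [hs]
    simp only [kRot, if_pos rfl, if_true, mul_one, kDm, neg_neg]
    rw [norm_diag, max_comm (|σ^(-e)|) (|σ^e|), max_zpow hσ]
  · simp only [kRot, if_neg hs]
    rw [Dm_mul_Rm_eq, norm_anti, abs_neg]
    simp only [neg_neg]
    rw [max_comm (|σ^(-e)|) (|σ^e|), max_zpow hσ]

lemma norm_P {σ : ℝ} (hσ : 1 < σ) (n : ℕ) (w : Fin n → Fin 2) :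
    ‖(toEuclideanCLM (𝕜 := ℝ) ((List.ofFn fun i => kM σ (w i)).reverse.prod) : E2 →L[ℝ] E2)‖
      = σ ^ |ke n w| := by
  rcases P_form (by positivity : σ ≠ 0) n w with h | h <;> rw [h]
  · exact norm_Rot_Dm hσ _ _
  · rw [map_neg, norm_neg]
    exact norm_Rot_Dm hσ _ _

lemma norm_N {σ : ℝ} (hσ : 1 < σ) (n : ℕ) (w : Fin n → Fin 2) :
    ‖(toEuclideanCLM (𝕜 := ℝ) ((List.ofFn fun i => kMinv σ (w i)).prod) : E2 →L[ℝ] E2)‖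
      = σ ^ |ke n w| := by
  rcases N_form (by positivity : σ ≠ 0) n w with h | h <;> rw [h]
  · exact norm_Dm_Rot hσ _ _
  · rw [map_neg, norm_neg]
    exact norm_Dm_Rot hσ _ _

end Norms

section Prob

variable (p : Fin 2 → ℝ)

lemma sum_succ (n : ℕ) (f : (Fin (n+1) → Fin 2) → ℝ) :
    ∑ w, f w = ∑ x : Fin 2, ∑ w' : Fin n → Fin 2, f (Fin.cons x w' : Fin (n+1) → Fin 2) := by
  have h := Fintype.sum_equiv (Fin.consEquiv (fun _ : Fin (n+1) => Fin 2))
    (fun q => f (Fin.cons q.1 q.2 : Fin (n+1) → Fin 2)) f (fun q => rfl)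
  rw [← h, Fintype.sum_prod_type]

lemma mu_cons (n : ℕ) (x : Fin 2) (w' : Fin n → Fin 2) :
    (∏ i : Fin (n+1), p ((Fin.cons x w' : Fin (n+1) → Fin 2) i)) = p x * ∏ i, p (w' i) := by
  rw [Fin.prod_univ_succ]
  simp [Fin.cons_succ]

lemma ke_cons (n : ℕ) (x : Fin 2) (w' : Fin n → Fin 2) :
    ke (n+1) (Fin.cons x w' : Fin (n+1) → Fin 2) = kg x + kh x * ke n w' := by
  simp [ke, Fin.tail_cons]

variable {p}

lemma sum_mu (hp1 : p 0 + p 1 = 1) (n : ℕ) : ∑ w : Fin n → Fin 2, ∏ i, p (w i) = 1 := by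
  induction n with
  | zero => simp
  | succ n ih =>
    rw [sum_succ]
    calc ∑ x : Fin 2, ∑ w' : Fin n → Fin 2, ∏ i, p ((Fin.cons x w' : Fin (n+1) → Fin 2) i)
        = ∑ x : Fin 2, ∑ w' : Fin n → Fin 2, p x * ∏ i, p (w' i) := by
          refine Finset.sum_congr rfl fun x _ => Finset.sum_congr rfl fun w' _ => ?_
          rw [mu_cons]
      _ = ∑ x : Fin 2, p x * ∑ w' : Fin n → Fin 2, ∏ i, p (w' i) := by
          refine Finset.sum_congr rfl fun x _ => ?_
          rw [Finset.mul_sum]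
      _ = 1 := by rw [ih, Fin.sum_univ_two]; simpa using hp1

lemma kMean_succ (hp1 : p 0 + p 1 = 1) (n : ℕ) :
    ∑ w : Fin (n+1) → Fin 2, (∏ i, p (w i)) * ((ke (n+1) w : ℤ) : ℝ)
      = p 0 + (p 0 - p 1) * ∑ w' : Fin n → Fin 2, (∏ i, p (w' i)) * ((ke n w' : ℤ) : ℝ) := by
  rw [sum_succ n (fun w => (∏ i, p (w i)) * ((ke (n+1) w : ℤ) : ℝ))]
  have key : ∀ x : Fin 2,
      ∑ w' : Fin n → Fin 2, (∏ i, p ((Fin.cons x w' : Fin (n+1) → Fin 2) i))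
          * ((ke (n+1) (Fin.cons x w' : Fin (n+1) → Fin 2) : ℤ) : ℝ)
        = (p x * (kg x : ℝ)) * (∑ w' : Fin n → Fin 2, ∏ i, p (w' i))
          + (p x * (kh x : ℝ)) * ∑ w' : Fin n → Fin 2, (∏ i, p (w' i)) * ((ke n w' : ℤ) : ℝ) := by
    intro x
    rw [Finset.mul_sum, Finset.mul_sum, ← Finset.sum_add_distrib]
    refine Finset.sum_congr rfl fun w' _ => ?_
    rw [mu_cons, ke_cons]
    push_cast
    ring
  rw [Fin.sum_univ_two, key 0, key 1, sum_mu hp1]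
  simp [kg, kh]
  ring

lemma kVar_succ (hp1 : p 0 + p 1 = 1) (n : ℕ) :
    ∑ w : Fin (n+1) → Fin 2, (∏ i, p (w i)) * ((ke (n+1) w : ℤ) : ℝ)^2
      = (∑ w' : Fin n → Fin 2, (∏ i, p (w' i)) * ((ke n w' : ℤ) : ℝ)^2)
        + 2 * p 0 * (∑ w' : Fin n → Fin 2, (∏ i, p (w' i)) * ((ke n w' : ℤ) : ℝ)) + p 0 := by
  rw [sum_succ n (fun w => (∏ i, p (w i)) * ((ke (n+1) w : ℤ) : ℝ)^2)]
  have key : ∀ x : Fin 2,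
      ∑ w' : Fin n → Fin 2, (∏ i, p ((Fin.cons x w' : Fin (n+1) → Fin 2) i))
          * ((ke (n+1) (Fin.cons x w' : Fin (n+1) → Fin 2) : ℤ) : ℝ)^2
        = (p x * (kg x : ℝ)^2) * (∑ w' : Fin n → Fin 2, ∏ i, p (w' i))
          + (2 * p x * (kg x : ℝ) * (kh x : ℝ))
              * (∑ w' : Fin n → Fin 2, (∏ i, p (w' i)) * ((ke n w' : ℤ) : ℝ))
          + (p x * (kh x : ℝ)^2)
              * ∑ w' : Fin n → Fin 2, (∏ i, p (w' i)) * ((ke n w' : ℤ) : ℝ)^2 := by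
    intro x
    rw [Finset.mul_sum, Finset.mul_sum, Finset.mul_sum, ← Finset.sum_add_distrib,
      ← Finset.sum_add_distrib]
    refine Finset.sum_congr rfl fun w' _ => ?_
    rw [mu_cons, ke_cons]
    push_cast
    ring
  rw [Fin.sum_univ_two, key 0, key 1, sum_mu hp1]
  simp only [kg, kh]
  norm_num
  linear_combination (∑ w' : Fin n → Fin 2, (∏ i, p (w' i)) * ((ke n w' : ℤ) : ℝ)^2) * hp1

lemma kMean_bound (hp0 : ∀ i, 0 ≤ p i) (hp1 : p 0 + p 1 = 1) (hp2 : 0 < p 1) (n : ℕ) :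
    |∑ w : Fin n → Fin 2, (∏ i, p (w i)) * ((ke n w : ℤ) : ℝ)| ≤ 1 / (2 * p 1) := by
  induction n with
  | zero =>
    have h : ∑ w : Fin 0 → Fin 2, (∏ i, p (w i)) * ((ke 0 w : ℤ) : ℝ) = 0 := by
      simp [ke]
    rw [h, abs_zero]
    positivity
  | succ n ih =>
    rw [kMean_succ hp1]
    set m := ∑ w' : Fin n → Fin 2, (∏ i, p (w' i)) * ((ke n w' : ℤ) : ℝ) with hm
    have h01 : 0 ≤ p 0 := hp0 0
    have hm0 : 0 ≤ |m| := abs_nonneg m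
    have hml : |m| * (2 * p 1) ≤ 1 := by
      rw [← le_div_iff₀ (by positivity)]
      exact ih
    have h2p : (0:ℝ) < 2 * p 1 := by positivity
    rw [le_div_iff₀ h2p]
    calc |p 0 + (p 0 - p 1) * m| * (2 * p 1)
        ≤ (p 0 + |p 0 - p 1| * |m|) * (2 * p 1) := by
          apply mul_le_mul_of_nonneg_right _ h2p.le
          refine (abs_add_le _ _).trans ?_
          rw [abs_of_nonneg h01, abs_mul]
      _ ≤ 1 := by
          rcases abs_cases (p 0 - p 1) with ⟨hq, _⟩ | ⟨hq, _⟩ <;> rw [hq] <;>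
            nlinarith [mul_nonneg hm0 h2p.le, mul_nonneg h01 hp2.le, mul_nonneg hm0 hp2.le,
              mul_nonneg hm0 h01]

lemma kVar_bound (hp0 : ∀ i, 0 ≤ p i) (hp1 : p 0 + p 1 = 1) (hp2 : 0 < p 1) (n : ℕ) :
    ∑ w : Fin n → Fin 2, (∏ i, p (w i)) * ((ke n w : ℤ) : ℝ)^2 ≤ n * (1 + 1 / p 1) := by
  induction n with
  | zero => simp [ke]
  | succ n ih =>
    rw [kVar_succ hp1]
    set m := ∑ w' : Fin n → Fin 2, (∏ i, p (w' i)) * ((ke n w' : ℤ) : ℝ) with hmdef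
    have hM := abs_le.mp (kMean_bound hp0 hp1 hp2 n)
    have h01 : 0 ≤ p 0 := hp0 0
    have hp0le : p 0 ≤ 1 := by nlinarith
    have step1 : 2 * p 0 * m ≤ 2 * p 0 * (1 / (2 * p 1)) :=
      mul_le_mul_of_nonneg_left hM.2 (by positivity)
    have step2 : 2 * p 0 * (1 / (2 * p 1)) = p 0 / p 1 := by
      field_simp
      try ring
    have step3 : p 0 / p 1 ≤ 1 / p 1 := by
      gcongr
    push_cast
    nlinarith [ih]

end Prob


section Final

lemma norm_kDm {σ : ℝ} (hσ : 1 < σ) (e : ℤ) :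
    ‖(toEuclideanCLM (𝕜 := ℝ) (kDm σ e) : E2 →L[ℝ] E2)‖ = σ^|e| := by
  simp only [kDm]
  rw [norm_diag, max_zpow hσ]

lemma kAbs_le {p : Fin 2 → ℝ} (hp0 : ∀ i, 0 ≤ p i) (hp1 : p 0 + p 1 = 1) (hp2 : 0 < p 1)
    (n : ℕ) :
    ∑ w : Fin n → Fin 2, (∏ i, p (w i)) * |((ke n w : ℤ) : ℝ)|
      ≤ Real.sqrt ((n : ℝ) * (1 + 1 / p 1)) := by
  set b := ∑ w : Fin n → Fin 2, (∏ i, p (w i)) * |((ke n w : ℤ) : ℝ)| with hb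
  have hmu : ∀ w : Fin n → Fin 2, 0 ≤ ∏ i, p (w i) :=
    fun w => Finset.prod_nonneg fun i _ => hp0 _
  have hb0 : 0 ≤ b := Finset.sum_nonneg fun w _ =>
    mul_nonneg (hmu w) (abs_nonneg _)
  have hcs : b^2 ≤ ∑ w : Fin n → Fin 2, (∏ i, p (w i)) * ((ke n w : ℤ) : ℝ)^2 := by
    have h := Finset.sum_mul_sq_le_sq_mul_sq Finset.univ
      (fun w : Fin n → Fin 2 => Real.sqrt (∏ i, p (w i)))
      (fun w : Fin n → Fin 2 => Real.sqrt (∏ i, p (w i)) * |((ke n w : ℤ) : ℝ)|)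
    have e1 : ∑ w : Fin n → Fin 2,
        Real.sqrt (∏ i, p (w i)) * (Real.sqrt (∏ i, p (w i)) * |((ke n w : ℤ) : ℝ)|) = b := by
      refine Finset.sum_congr rfl fun w _ => ?_
      rw [← mul_assoc, Real.mul_self_sqrt (hmu w)]
    have e2 : ∑ w : Fin n → Fin 2, (Real.sqrt (∏ i, p (w i)))^2 = 1 := by
      rw [← sum_mu hp1 n]
      refine Finset.sum_congr rfl fun w _ => Real.sq_sqrt (hmu w)
    have e3 : ∑ w : Fin n → Fin 2, (Real.sqrt (∏ i, p (w i)) * |((ke n w : ℤ) : ℝ)|)^2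
        = ∑ w : Fin n → Fin 2, (∏ i, p (w i)) * ((ke n w : ℤ) : ℝ)^2 := by
      refine Finset.sum_congr rfl fun w _ => ?_
      rw [mul_pow, Real.sq_sqrt (hmu w), sq_abs]
    rw [e1, e2, e3, one_mul] at h
    exact h
  have hvb := kVar_bound hp0 hp1 hp2 n
  have : b^2 ≤ (n : ℝ) * (1 + 1 / p 1) := le_trans hcs hvb
  calc b = Real.sqrt (b^2) := (Real.sqrt_sq hb0).symm
    _ ≤ Real.sqrt ((n : ℝ) * (1 + 1 / p 1)) := Real.sqrt_le_sqrt this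

lemma tendsto_main {K C : ℝ} (hK : 0 ≤ K) (hC : 0 ≤ C) (b : ℕ → ℝ)
    (hb0 : ∀ n, 0 ≤ b n) (hb1 : ∀ n, b n ≤ Real.sqrt ((n : ℝ) * C)) :
    Filter.Tendsto (fun n : ℕ => (1 / (n : ℝ)) * (K * b n)) Filter.atTop (nhds 0) := by
  have hsqrt : Filter.Tendsto (fun n : ℕ => Real.sqrt (n : ℝ)) Filter.atTop Filter.atTop := by
    have h1 : Filter.Tendsto Real.sqrt Filter.atTop Filter.atTop := by
      apply tendsto_atTop_atTop_of_monotone (fun a b hab => Real.sqrt_le_sqrt hab)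
      exact fun c => ⟨c^2, by rw [Real.sqrt_sq_eq_abs]; exact le_abs_self c⟩
    exact h1.comp tendsto_natCast_atTop_atTop
  have hg : Filter.Tendsto (fun n : ℕ => (K * Real.sqrt C) * (1 / Real.sqrt (n : ℝ)))
      Filter.atTop (nhds 0) := by
    have h0 : Filter.Tendsto (fun n : ℕ => 1 / Real.sqrt (n : ℝ)) Filter.atTop (nhds 0) := by
      simp only [one_div]
      exact tendsto_inv_atTop_zero.comp hsqrt
    have := h0.const_mul (K * Real.sqrt C)
    simpa using this
  apply squeeze_zero (fun n => ?_) (fun n => ?_) hg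
  · have h : (0:ℝ) ≤ (n:ℝ) := Nat.cast_nonneg n
    have := hb0 n
    positivity
  · rcases Nat.eq_zero_or_pos n with hn | hn
    · subst hn
      have hlhs : (1 / ((0:ℕ) : ℝ)) * (K * b 0) = 0 := by norm_num
      rw [hlhs]
      exact mul_nonneg (mul_nonneg hK (Real.sqrt_nonneg _)) (by positivity)
    · have h1 : b n ≤ Real.sqrt (n : ℝ) * Real.sqrt C := by
        rw [← Real.sqrt_mul (Nat.cast_nonneg n)]
        exact hb1 n
      have h2 : (1 / (n : ℝ)) * (K * b n)
          ≤ (1 / (n : ℝ)) * (K * (Real.sqrt (n:ℝ) * Real.sqrt C)) := by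
        apply mul_le_mul_of_nonneg_left _ (by positivity)
        exact mul_le_mul_of_nonneg_left h1 hK
      refine h2.trans (le_of_eq ?_)
      have he : (1 / (n:ℝ)) * (K * (Real.sqrt (n:ℝ) * Real.sqrt C))
          = (K * Real.sqrt C) * (Real.sqrt (n:ℝ) / (n:ℝ)) := by ring
      rw [he, Real.sqrt_div_self']

end Final

end KiferAux

open KiferAux in
/-- Kifer's example (Remark `r.vanishingpi`): for the i.i.d. random product of
`A₁ = diag(σ, σ⁻¹)` (σ > 1) and the rotation `A₂ = [[0,−1],[1,0]]` with weights
`(p₁,p₂)`, `p₂ > 0`, both Lyapunov exponents vanish: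
`λ₊ = lim (1/n) E[log‖L^n‖] = 0` and `λ₋ = lim (1/n) E[log‖(L^n)⁻¹‖⁻¹] = 0`.
In particular, since `λ₊(A,(1,0)) = log σ > 0` (third claim), the Lyapunov exponents
are discontinuous at the degenerate probability vector `(1,0)`. -/
theorem stmt19 (σ : ℝ) (hσ : 1 < σ) (p : Fin 2 → ℝ)
    (hp0 : ∀ i, 0 ≤ p i) (hp1 : p 0 + p 1 = 1) (hp2 : 0 < p 1)
    (A Ainv : Fin 2 → (EuclideanSpace ℝ (Fin 2) →L[ℝ] EuclideanSpace ℝ (Fin 2)))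
    (hA0 : A 0 = Matrix.toEuclideanCLM (𝕜 := ℝ) !![σ, 0; 0, σ⁻¹])
    (hA1 : A 1 = Matrix.toEuclideanCLM (𝕜 := ℝ) !![0, -1; 1, 0])
    (hAinv0 : Ainv 0 = Matrix.toEuclideanCLM (𝕜 := ℝ) !![σ⁻¹, 0; 0, σ])
    (hAinv1 : Ainv 1 = Matrix.toEuclideanCLM (𝕜 := ℝ) !![0, 1; -1, 0]) :
    Tendsto (fun n : ℕ => (1 / (n : ℝ)) * ∑ w : Fin n → Fin 2,
        (∏ i, p (w i)) * Real.log ‖(List.ofFn fun i => A (w i)).reverse.prod‖)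
      atTop (nhds 0)
    ∧ Tendsto (fun n : ℕ => (1 / (n : ℝ)) * ∑ w : Fin n → Fin 2,
        (∏ i, p (w i)) * Real.log (‖(List.ofFn fun i => Ainv (w i)).prod‖⁻¹))
      atTop (nhds 0)
    ∧ Tendsto (fun n : ℕ =>
        (1 / (n : ℝ)) * Real.log ‖(List.ofFn fun _ : Fin n => A 0).prod‖)
      atTop (nhds (Real.log σ)) := by
  have hσ0 : (0:ℝ) < σ := lt_trans one_pos hσ
  have hσne : σ ≠ 0 := ne_of_gt hσ0
  have hlog : 0 ≤ Real.log σ := Real.log_nonneg hσ.le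
  have hC : (0:ℝ) ≤ 1 + 1 / p 1 := by positivity
  have hA' : ∀ i, A i = Matrix.toEuclideanCLM (𝕜 := ℝ) (kM σ i) := by
    intro i
    have hi : i = 0 ∨ i = 1 := by omega
    rcases hi with hi | hi <;> subst hi
    · rw [hA0]
      rfl
    · rw [hA1]
      rfl
  have hAinv' : ∀ i, Ainv i = Matrix.toEuclideanCLM (𝕜 := ℝ) (kMinv σ i) := by
    intro i
    have hi : i = 0 ∨ i = 1 := by omega
    rcases hi with hi | hi <;> subst hi
    · rw [hAinv0]
      rfl
    · rw [hAinv1]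
      rfl
  have hnorm1 : ∀ (n : ℕ) (w : Fin n → Fin 2),
      Real.log ‖(List.ofFn fun i => A (w i)).reverse.prod‖
        = |((ke n w : ℤ) : ℝ)| * Real.log σ := by
    intro n w
    have hb : (List.ofFn fun i => A (w i)).reverse.prod
        = Matrix.toEuclideanCLM (𝕜 := ℝ) ((List.ofFn fun i => kM σ (w i)).reverse.prod) := by
      simp_rw [hA']
      rw [map_list_prod, List.map_reverse, List.map_ofFn]
      rfl
    rw [hb, norm_P hσ, Real.log_zpow]
    push_cast
    ring
  have hnorm2 : ∀ (n : ℕ) (w : Fin n → Fin 2),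
      Real.log (‖(List.ofFn fun i => Ainv (w i)).prod‖⁻¹)
        = -(|((ke n w : ℤ) : ℝ)| * Real.log σ) := by
    intro n w
    have hb : (List.ofFn fun i => Ainv (w i)).prod
        = Matrix.toEuclideanCLM (𝕜 := ℝ) ((List.ofFn fun i => kMinv σ (w i)).prod) := by
      simp_rw [hAinv']
      rw [map_list_prod, List.map_ofFn]
      rfl
    rw [Real.log_inv, hb, norm_N hσ, Real.log_zpow]
    push_cast
    ring
  have hsum1 : ∀ n : ℕ,
      ∑ w : Fin n → Fin 2, (∏ i, p (w i)) * Real.log ‖(List.ofFn fun i => A (w i)).reverse.prod‖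
        = Real.log σ * ∑ w : Fin n → Fin 2, (∏ i, p (w i)) * |((ke n w : ℤ) : ℝ)| := by
    intro n
    rw [Finset.mul_sum]
    refine Finset.sum_congr rfl fun w _ => ?_
    rw [hnorm1 n w]
    ring
  have hsum2 : ∀ n : ℕ,
      ∑ w : Fin n → Fin 2, (∏ i, p (w i)) * Real.log (‖(List.ofFn fun i => Ainv (w i)).prod‖⁻¹)
        = -(Real.log σ * ∑ w : Fin n → Fin 2, (∏ i, p (w i)) * |((ke n w : ℤ) : ℝ)|) := by
    intro n
    have step : ∑ w : Fin n → Fin 2, (∏ i, p (w i)) * Real.log (‖(List.ofFn fun i => Ainv (w i)).prod‖⁻¹)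
        = ∑ w : Fin n → Fin 2, -(Real.log σ * ((∏ i, p (w i)) * |((ke n w : ℤ) : ℝ)|)) := by
      refine Finset.sum_congr rfl fun w _ => ?_
      rw [hnorm2 n w]
      ring
    rw [step, Finset.sum_neg_distrib, ← Finset.mul_sum]
  have hb0 : ∀ n : ℕ, 0 ≤ ∑ w : Fin n → Fin 2, (∏ i, p (w i)) * |((ke n w : ℤ) : ℝ)| := by
    intro n
    refine Finset.sum_nonneg fun w _ => mul_nonneg (Finset.prod_nonneg fun i _ => hp0 _) (abs_nonneg _)
  have hb1 : ∀ n : ℕ, (∑ w : Fin n → Fin 2, (∏ i, p (w i)) * |((ke n w : ℤ) : ℝ)|)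
      ≤ Real.sqrt ((n : ℝ) * (1 + 1 / p 1)) := fun n => kAbs_le hp0 hp1 hp2 n
  have T := tendsto_main hlog hC _ hb0 hb1
  refine ⟨?_, ?_, ?_⟩
  · exact T.congr fun n => by rw [hsum1 n]
  · have T2 := T.neg
    rw [neg_zero] at T2
    apply T2.congr fun n => ?_
    rw [hsum2 n]
    ring
  · have hDn : ∀ n : ℕ, (List.ofFn fun _ : Fin n => A 0).prod
        = Matrix.toEuclideanCLM (𝕜 := ℝ) (kDm σ (n : ℤ)) := by
      intro n
      induction n with
      | zero =>
        rw [List.ofFn_zero, List.prod_nil]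
        rw [show ((0:ℕ):ℤ) = 0 from rfl, Dm_zero]
        exact (map_one _).symm
      | succ n ih =>
        rw [List.ofFn_succ, List.prod_cons, ih, hA' 0, kM_zero, ← map_mul, Dm_mul_Dm hσne]
        congr 2
        push_cast
        ring
    have hconst : ∀ n : ℕ, 1 ≤ n →
        (1/(n:ℝ)) * Real.log ‖(List.ofFn fun _ : Fin n => A 0).prod‖ = Real.log σ := by
      intro n hn
      have hnne : (n:ℝ) ≠ 0 := Nat.cast_ne_zero.mpr (by omega)
      rw [hDn n, norm_kDm hσ, Real.log_zpow]
      rw [abs_of_nonneg (Int.ofNat_nonneg n)]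
      push_cast
      field_simp
    apply Filter.Tendsto.congr' _ (tendsto_const_nhds (x := Real.log σ))
    filter_upwards [Filter.eventually_ge_atTop 1] with n hn
    exact (hconst n hn).symm
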